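/- Let d ≥ 1, r ≥ 1 be integers, ε > 0, and let 𝓗 be a finite family of digraphs, each having at most r vertices and at least one edge. Let G be a digraph on n vertices with out-degree at most d such that every digraph G' on the same vertex set with out-degree at most d that is 𝓗-free (contains no subgraph copy of any member of 𝓗) satisfies dist(G,G') > ε·d·n. Then G contains at least ε·n/r pairwise edge-disjoint subgraph copies of members of 𝓗. -/
import Mathlib


/-- A digraph: a finite vertex set `Fin n` with an irreflexive edge set. -/
structure Dgraph where
  n : ℕ
  E : Finset (Fin n × Fin n)
  irrefl : ∀ e ∈ E, e.1 ≠ e.2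

/-- The out-degree of a vertex `v` with respect to an edge set `E`. -/
def outdeg {n : ℕ} (E : Finset (Fin n × Fin n)) (v : Fin n) : ℕ :=
  (E.filter (fun e => e.1 = v)).card

/-- `φ` is a subgraph copy of the digraph with edge set `HE` in the digraph
with edge set `GE`. -/
def IsCopy {k n : ℕ} (HE : Finset (Fin k × Fin k)) (GE : Finset (Fin n × Fin n))
    (φ : Fin k → Fin n) : Prop :=
  Function.Injective φ ∧ ∀ e ∈ HE, (φ e.1, φ e.2) ∈ GE

/-- The edge set of the copy given by `φ`. -/
def copyEdges {k n : ℕ} (HE : Finset (Fin k × Fin k)) (φ : Fin k → Fin n) :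
    Finset (Fin n × Fin n) :=
  HE.image (fun e => (φ e.1, φ e.2))

/-- An edge set `GE` is `𝓗`-free: it has no subgraph copy of any member of the
family `H : Fin t → Dgraph`. -/
def HFree {n : ℕ} (t : ℕ) (H : Fin t → Dgraph) (GE : Finset (Fin n × Fin n)) : Prop :=
  ∀ i : Fin t, ∀ φ : Fin (H i).n → Fin n, ¬ IsCopy (H i).E GE φ

/-- Auxiliary: a copy with sources among `k` vertices in a graph of max
out-degree `d` has at most `k * d` edges. -/
lemma copy_card_le {k n d : ℕ} (HE : Finset (Fin k × Fin k)) (E : Finset (Fin n × Fin n))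
    (φ : Fin k → Fin n) (h : ∀ e ∈ HE, (φ e.1, φ e.2) ∈ E)
    (hdeg : ∀ v, outdeg E v ≤ d) : (copyEdges HE φ).card ≤ k * d := by
  classical
  set S : Finset (Fin n) := Finset.univ.image φ with hS
  have hsub : copyEdges HE φ ⊆ S.biUnion (fun v => E.filter (fun e => e.1 = v)) := by
    intro e he
    obtain ⟨a, ha, rfl⟩ := Finset.mem_image.mp he
    exact Finset.mem_biUnion.mpr ⟨φ a.1, Finset.mem_image_of_mem _ (Finset.mem_univ _),
      Finset.mem_filter.mpr ⟨h a ha, rfl⟩⟩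
  calc (copyEdges HE φ).card ≤ (S.biUnion (fun v => E.filter (fun e => e.1 = v))).card :=
        Finset.card_le_card hsub
    _ ≤ ∑ v ∈ S, (E.filter (fun e => e.1 = v)).card := Finset.card_biUnion_le
    _ ≤ ∑ _v ∈ S, d := Finset.sum_le_sum (fun v _ => hdeg v)
    _ = S.card * d := by simp [Finset.sum_const, mul_comm]
    _ ≤ k * d := Nat.mul_le_mul_right d (by
        simpa using Finset.card_image_le (s := (Finset.univ : Finset (Fin k))) (f := φ))

/-- if every `𝓗`-free `d`-out-bounded digraph on the same vertex set is at
distance more than `ε·d·n` from `G`, then `G` contains at least `ε·n/r` pairwise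
edge-disjoint subgraph copies of members of `𝓗`. -/
theorem many_edge_disjoint_copies_of_far
    (d r : ℕ) (hd : 1 ≤ d) (hr : 1 ≤ r) (ε : ℝ) (hε : 0 < ε)
    (t : ℕ) (H : Fin t → Dgraph)
    (hsize : ∀ i, (H i).n ≤ r) (hedge : ∀ i, ((H i).E).Nonempty)
    (n : ℕ) (E : Finset (Fin n × Fin n)) (hirr : ∀ e ∈ E, e.1 ≠ e.2)
    (hdeg : ∀ v, outdeg E v ≤ d)
    (hfar : ∀ E' : Finset (Fin n × Fin n), (∀ e ∈ E', e.1 ≠ e.2) →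
      (∀ v, outdeg E' v ≤ d) → HFree t H E' →
      (ε * d * n : ℝ) < ((symmDiff E E').card : ℝ)) :
    ∃ m : ℕ, (ε * n / r : ℝ) ≤ (m : ℝ) ∧
      ∃ (idx : Fin m → Fin t) (φ : ∀ j, Fin (H (idx j)).n → Fin n),
        (∀ j, IsCopy (H (idx j)).E E (φ j)) ∧
        ∀ j j', j ≠ j' →
          Disjoint (copyEdges (H (idx j)).E (φ j)) (copyEdges (H (idx j')).E (φ j')) := by
  classical
  let C := Σ i : Fin t, (Fin (H i).n → Fin n)
  let ed : C → Finset (Fin n × Fin n) := fun c => copyEdges (H c.1).E c.2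
  let P : ℕ → Prop := fun m => ∃ ψ : Fin m → C,
    (∀ j, IsCopy (H (ψ j).1).E E (ψ j).2) ∧
    ∀ j j', j ≠ j' → Disjoint (ed (ψ j)) (ed (ψ j'))
  have hP0 : P 0 := ⟨fun j => j.elim0, fun j => j.elim0, fun j => j.elim0⟩
  have hbound : ∀ m, P m → m ≤ E.card := by
    rintro m ⟨ψ, hcopy, hdisj⟩
    have hsub : ∀ j, ed (ψ j) ⊆ E := by
      intro j e he
      obtain ⟨a, ha, rfl⟩ := Finset.mem_image.mp he
      exact (hcopy j).2 a ha
    have hne : ∀ j, (ed (ψ j)).Nonempty := fun j =>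
      Finset.Nonempty.image (hedge _) _
    calc m = ∑ _j : Fin m, 1 := by simp
      _ ≤ ∑ j : Fin m, (ed (ψ j)).card :=
          Finset.sum_le_sum (fun j _ => (hne j).card_pos)
      _ = (Finset.univ.biUnion fun j => ed (ψ j)).card :=
          (Finset.card_biUnion (fun x _ y _ h => hdisj x y h)).symm
      _ ≤ E.card := Finset.card_le_card (Finset.biUnion_subset.mpr fun j _ => hsub j)
  set m := Nat.findGreatest P E.card with hm
  obtain ⟨ψ, hcopy, hdisj⟩ : P m := Nat.findGreatest_spec (Nat.zero_le _) hP0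
  refine ⟨m, ?_, fun j => (ψ j).1, fun j => (ψ j).2, hcopy, hdisj⟩
  -- the union of edges of the chosen copies
  set R := Finset.univ.biUnion (fun j : Fin m => ed (ψ j)) with hR
  set E' := E \ R with hE'
  have hE'sub : E' ⊆ E := Finset.sdiff_subset
  have hfree : HFree t H E' := by
    intro i φ0 hcp
    have hPm1 : P (m + 1) := by
      refine ⟨Fin.snoc ψ ⟨i, φ0⟩, ?_, ?_⟩
      · intro j
        rcases Fin.eq_castSucc_or_eq_last j with ⟨jc, rfl⟩ | rfl
        · rw [Fin.snoc_castSucc]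
          exact hcopy jc
        · rw [Fin.snoc_last]
          exact ⟨hcp.1, fun e he => hE'sub (hcp.2 e he)⟩
      · have hdnew : ∀ j : Fin m, Disjoint (ed (⟨i, φ0⟩ : C)) (ed (ψ j)) := by
          intro j
          have h1 : ed (⟨i, φ0⟩ : C) ⊆ E' := by
            intro e he
            obtain ⟨a, ha, rfl⟩ := Finset.mem_image.mp he
            exact hcp.2 a ha
          have h2 : ed (ψ j) ⊆ R :=
            fun e he => Finset.mem_biUnion.mpr ⟨j, Finset.mem_univ _, he⟩
          exact Finset.sdiff_disjoint.mono h1 h2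
        intro j j' hne
        rcases Fin.eq_castSucc_or_eq_last j with ⟨jc, rfl⟩ | rfl <;>
          rcases Fin.eq_castSucc_or_eq_last j' with ⟨jc', rfl⟩ | rfl
        · rw [Fin.snoc_castSucc, Fin.snoc_castSucc]
          exact hdisj jc jc' (fun h => hne (by rw [h]))
        · rw [Fin.snoc_castSucc, Fin.snoc_last]
          exact (hdnew jc).symm
        · rw [Fin.snoc_last, Fin.snoc_castSucc]
          exact hdnew jc'
        · exact absurd rfl hne
    exact Nat.findGreatest_is_greatest (Nat.lt_succ_self m) (hbound _ hPm1) hPm1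
  have hirr' : ∀ e ∈ E', e.1 ≠ e.2 := fun e he => hirr e (hE'sub he)
  have hdeg' : ∀ v, outdeg E' v ≤ d := fun v =>
    le_trans (Finset.card_le_card (Finset.filter_subset_filter _ hE'sub)) (hdeg v)
  have hfar' := hfar E' hirr' hdeg' hfree
  -- symmDiff E E' ⊆ R
  have hsd : symmDiff E E' ⊆ R := by
    intro e he
    have := Finset.mem_symmDiff.mp he
    rcases this with ⟨heE, heE'⟩ | ⟨heE', heE⟩
    · by_contra hnR
      exact heE' (Finset.mem_sdiff.mpr ⟨heE, hnR⟩)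
    · exact absurd (hE'sub heE') heE
  have hRcard : R.card ≤ m * (r * d) := by
    calc R.card ≤ ∑ j : Fin m, (ed (ψ j)).card := Finset.card_biUnion_le
      _ ≤ ∑ _j : Fin m, r * d := by
          refine Finset.sum_le_sum (fun j _ => ?_)
          calc (ed (ψ j)).card ≤ (H (ψ j).1).n * d :=
                copy_card_le _ _ _ (hcopy j).2 hdeg
            _ ≤ r * d := Nat.mul_le_mul_right d (hsize _)
      _ = m * (r * d) := by simp [mul_comm]
  have hnum : (ε * d * n : ℝ) < (m : ℝ) * (r * d) := by
    calc (ε * d * n : ℝ) < ((symmDiff E E').card : ℝ) := hfar'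
      _ ≤ (R.card : ℝ) := by exact_mod_cast Finset.card_le_card hsd
      _ ≤ (m : ℝ) * (r * d) := by exact_mod_cast hRcard
  have hdpos : (0 : ℝ) < d := by exact_mod_cast hd
  have hrpos : (0 : ℝ) < r := by exact_mod_cast hr
  rw [div_le_iff₀ hrpos]
  nlinarith [hnum, hdpos]
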